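/- Let X be a polyadic space. Then dd(X) = [d(X), w(X)]; that is, for every cardinal λ, X has a dense subspace of density λ if and only if d(X) ≤ λ ≤ w(X). -/

import Mathlib

open Cardinal Set Function

universe u

noncomputable section

/-- The density of a topological space: least cardinality of a dense subset. -/
def tdensity (X : Type u) [TopologicalSpace X] : Cardinal.{u} :=
  sInf {c : Cardinal.{u} | ∃ s : Set X, Dense s ∧ #s = c}

/-- The weight of a topological space: least cardinality of a base. -/
def tweight (X : Type u) [TopologicalSpace X] : Cardinal.{u} :=
  sInf {c : Cardinal.{u} | ∃ B : Set (Set X), TopologicalSpace.IsTopologicalBasis B ∧ #B = c}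

/-- The π-weight: least cardinality of a π-base. -/
def piWeight (X : Type u) [TopologicalSpace X] : Cardinal.{u} :=
  sInf {c : Cardinal.{u} | ∃ B : Set (Set X),
    (∀ U ∈ B, IsOpen U ∧ U.Nonempty) ∧
    (∀ V : Set X, IsOpen V → V.Nonempty → ∃ U ∈ B, U ⊆ V) ∧ #B = c}

/-- ĉ(X): the least cardinal κ such that X has no pairwise disjoint family of κ
nonempty open sets. -/
def hatCell (X : Type u) [TopologicalSpace X] : Cardinal.{u} :=
  sInf {c : Cardinal.{u} | ¬ ∃ 𝒰 : Set (Set X),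
    (∀ U ∈ 𝒰, IsOpen U ∧ U.Nonempty) ∧ 𝒰.PairwiseDisjoint id ∧ #𝒰 = c}

/-- `H` is a closed G_λ set: closed and the intersection of at most λ open sets. -/
def IsClosedGLambda (lam : Cardinal.{u}) {X : Type u} [TopologicalSpace X] (H : Set X) : Prop :=
  IsClosed H ∧ ∃ 𝒰 : Set (Set X), (∀ U ∈ 𝒰, IsOpen U) ∧ #𝒰 ≤ lam ∧ H = ⋂₀ 𝒰

/-- X ∈ Γ(λ): every closed G_λ set has density ≤ λ. -/
def InGamma (lam : Cardinal.{u}) (X : Type u) [TopologicalSpace X] : Prop :=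
  ∀ H : Set X, IsClosedGLambda lam H → tdensity ↥H ≤ lam

/-- `S` witnesses `X ∈ Δ(λ)`. -/
def DeltaWitness (lam : Cardinal.{u}) (X : Type u) [TopologicalSpace X] (S : Set X) : Prop :=
  Dense S ∧
  (∀ T : Set X, T ⊆ S → #T < lam → tweight ↥(closure T) < lam) ∧
  (∀ (Y : Type u) (_ : TopologicalSpace Y), T2Space Y → ∀ f : X → Y,
     Continuous f → Surjective f → tweight Y = lam → #(f '' S) = lam)

/-- X ∈ Δ(λ). -/
def InDelta (lam : Cardinal.{u}) (X : Type u) [TopologicalSpace X] : Prop :=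
  lam ≤ tweight X ∧ ∃ S : Set X, DeltaWitness lam X S

/-- A canonical discrete space of cardinality `c`. -/
instance (c : Cardinal.{u}) : TopologicalSpace c.out := ⊥

instance (c : Cardinal.{u}) : DiscreteTopology c.out := ⟨rfl⟩

/-- A(μ): one-point compactification of a discrete space of cardinality μ. -/
def ACompact (μ : Cardinal.{u}) : Type u := OnePoint μ.out

instance (μ : Cardinal.{u}) : TopologicalSpace (ACompact μ) :=
  inferInstanceAs (TopologicalSpace (OnePoint μ.out))

/-- A(μ)^κ. -/
def APow (μ κ : Cardinal.{u}) : Type u := κ.out → ACompact μ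

instance (μ κ : Cardinal.{u}) : TopologicalSpace (APow μ κ) :=
  inferInstanceAs (TopologicalSpace (κ.out → ACompact μ))

/-- The set of finite-support points of A(μ)^κ. -/
def finSupport (μ κ : Cardinal.{u}) : Set (APow μ κ) :=
  {x | {ξ | x ξ ≠ (OnePoint.infty : OnePoint μ.out)}.Finite}

/-- X is polyadic: a continuous image of some A(μ)^κ. -/
def IsPolyadic (X : Type u) [TopologicalSpace X] : Prop :=
  ∃ μ κ : Cardinal.{u}, ℵ₀ ≤ μ ∧ ∃ f : APow μ κ → X, Continuous f ∧ Surjective f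
open TopologicalSpace

section DensityBasics

open TopologicalSpace

variable {X : Type u} [TopologicalSpace X]

lemma tdensity_le_of_dense {s : Set X} (hs : Dense s) : tdensity X ≤ #s :=
  csInf_le' ⟨s, hs, rfl⟩

lemma exists_dense_card (X : Type u) [TopologicalSpace X] :
    ∃ s : Set X, Dense s ∧ #s = tdensity X := by
  have h : {c : Cardinal.{u} | ∃ s : Set X, Dense s ∧ #s = c}.Nonempty :=
    ⟨#(univ : Set X), univ, dense_univ, rfl⟩
  exact csInf_mem h

lemma le_tdensity {c : Cardinal.{u}} (h : ∀ s : Set X, Dense s → c ≤ #s) : c ≤ tdensity X := by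
  obtain ⟨s, hs, hcard⟩ := exists_dense_card X
  rw [← hcard]; exact h s hs

lemma tdensity_le_mk (X : Type u) [TopologicalSpace X] : tdensity X ≤ #X := by
  simpa using tdensity_le_of_dense (dense_univ (X := X))

lemma tweight_le_of_basis {B : Set (Set X)} (hB : IsTopologicalBasis B) : tweight X ≤ #B :=
  csInf_le' ⟨B, hB, rfl⟩

lemma exists_basis_card (X : Type u) [TopologicalSpace X] :
    ∃ B : Set (Set X), IsTopologicalBasis B ∧ #B = tweight X := by
  have h : {c : Cardinal.{u} | ∃ B : Set (Set X), IsTopologicalBasis B ∧ #B = c}.Nonempty := by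
    exact ⟨_, {U | IsOpen U}, isTopologicalBasis_opens, rfl⟩
  exact csInf_mem h

lemma tdensity_le_tweight (X : Type u) [TopologicalSpace X] : tdensity X ≤ tweight X := by
  obtain ⟨B, hB, hcard⟩ := exists_basis_card X
  by_cases hne : Nonempty X
  · classical
    obtain ⟨x0⟩ := hne
    set pt : ↥B → X := fun U => if h : (U : Set X).Nonempty then h.choose else x0 with hpt
    have hdense : Dense (range pt) := by
      intro x
      rw [mem_closure_iff]
      intro O hO hxO
      obtain ⟨U, hU, hxU, hUO⟩ := hB.exists_subset_of_mem_open hxO hO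
      have hUne : (U : Set X).Nonempty := ⟨x, hxU⟩
      refine ⟨pt ⟨U, hU⟩, hUO ?_, ⟨U, hU⟩, rfl⟩
      have := hUne.choose_spec
      simp only [hpt, dif_pos hUne]
      exact this
    calc tdensity X ≤ #(range pt) := tdensity_le_of_dense hdense
      _ ≤ #↥B := mk_range_le
      _ = tweight X := hcard
  · rw [not_nonempty_iff] at hne
    have : tdensity X ≤ #X := tdensity_le_mk X
    simp [Cardinal.mk_eq_zero] at this
    simp [this]

lemma dense_subtype_iff {D : Set X} {s : Set ↥D} :
    Dense s ↔ D ⊆ closure (Subtype.val '' s) := by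
  constructor
  · intro h x hx
    have := h ⟨x, hx⟩
    rwa [closure_subtype] at this
  · intro h x
    rw [closure_subtype]; exact h x.2

lemma tdensity_subtype_le {D T : Set X} (hT : T ⊆ D) (h : D ⊆ closure T) :
    tdensity ↥D ≤ #T := by
  have himg : Subtype.val '' (Subtype.val ⁻¹' T : Set ↥D) = T := by
    rw [Subtype.image_preimage_coe]
    exact inter_eq_self_of_subset_right hT
  have hdense : Dense (Subtype.val ⁻¹' T : Set ↥D) := by
    rw [dense_subtype_iff, himg]; exact h
  have hmk : #(Subtype.val '' (Subtype.val ⁻¹' T : Set ↥D)) = #(Subtype.val ⁻¹' T : Set ↥D) :=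
    mk_image_eq Subtype.val_injective
  calc tdensity ↥D ≤ #(Subtype.val ⁻¹' T : Set ↥D) := tdensity_le_of_dense hdense
    _ = #T := by rw [← hmk, himg]

lemma le_tdensity_subtype {D : Set X} {c : Cardinal.{u}}
    (h : ∀ T : Set X, T ⊆ D → D ⊆ closure T → c ≤ #T) : c ≤ tdensity ↥D := by
  apply le_tdensity
  intro s hs
  rw [dense_subtype_iff] at hs
  have h2 := h (Subtype.val '' s) (by rintro x ⟨y, _, rfl⟩; exact y.2) hs
  rwa [mk_image_eq Subtype.val_injective] at h2

/-- the easy case λ = d(X) -/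
lemma exists_dense_density_self (X : Type u) [TopologicalSpace X] :
    ∃ D : Set X, Dense D ∧ tdensity ↥D = tdensity X := by
  obtain ⟨D, hD, hcard⟩ := exists_dense_card X
  refine ⟨D, hD, le_antisymm ?_ ?_⟩
  · calc tdensity ↥D ≤ #↥D := tdensity_le_mk ↥D
      _ = tdensity X := hcard
  · apply le_tdensity_subtype
    intro T _ hDT
    have hTd : Dense T := by
      rw [dense_iff_closure_eq]
      apply eq_univ_of_univ_subset
      calc (Set.univ : Set X) = closure D := (dense_iff_closure_eq.mp hD).symm
        _ ⊆ closure (closure T) := closure_mono hDT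
        _ = closure T := closure_closure
    exact tdensity_le_of_dense hTd

/-- forward direction packaged -/
lemma tdensity_subtype_between {D : Set X} (hD : Dense D) :
    tdensity X ≤ tdensity ↥D ∧ tdensity ↥D ≤ tweight X := by
  constructor
  · obtain ⟨s, hs, hcard⟩ := exists_dense_card ↥D
    rw [dense_subtype_iff] at hs
    have hTd : Dense (Subtype.val '' s) := by
      rw [dense_iff_closure_eq]
      apply eq_univ_of_univ_subset
      calc (Set.univ : Set X) = closure D := (dense_iff_closure_eq.mp hD).symm
        _ ⊆ closure (closure (Subtype.val '' s)) := closure_mono hs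
        _ = closure _ := closure_closure
    calc tdensity X ≤ #(Subtype.val '' s) := tdensity_le_of_dense hTd
      _ = #s := mk_image_eq Subtype.val_injective
      _ = tdensity ↥D := hcard
  · obtain ⟨B, hB, hcard⟩ := exists_basis_card X
    by_cases hne : Nonempty X
    · classical
      have hDne : D.Nonempty := hD.nonempty
      obtain ⟨d0, hd0⟩ := hDne
      set pt : ↥B → X := fun U => if h : ((U : Set X) ∩ D).Nonempty then h.choose else d0 with hpt
      have hptD : ∀ U : ↥B, pt U ∈ D := by
        intro U
        by_cases h : ((U : Set X) ∩ D).Nonempty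
        · simp only [hpt, dif_pos h]; exact h.choose_spec.2
        · simp only [hpt, dif_neg h]; exact hd0
      have hsub : range pt ⊆ D := by rintro x ⟨U, rfl⟩; exact hptD U
      have hcl : D ⊆ closure (range pt) := by
        intro x hx
        rw [mem_closure_iff]
        intro O hO hxO
        obtain ⟨U, hU, hxU, hUO⟩ := hB.exists_subset_of_mem_open hxO hO
        have hUne : ((U : Set X) ∩ D).Nonempty := ⟨x, hxU, hx⟩
        refine ⟨pt ⟨U, hU⟩, hUO ?_, ⟨U, hU⟩, rfl⟩
        have := hUne.choose_spec.1
        simpa only [hpt, dif_pos hUne] using this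
      calc tdensity ↥D ≤ #(range pt) := tdensity_subtype_le hsub hcl
        _ ≤ #↥B := mk_range_le
        _ = tweight X := hcard
    · rw [not_nonempty_iff] at hne
      have h1 : tdensity ↥D ≤ #↥D := tdensity_le_mk ↥D
      have h2 : #↥D = 0 := by
        have : IsEmpty ↥D := ⟨fun x => hne.elim x.1⟩
        exact Cardinal.mk_eq_zero ↥D
      rw [h2] at h1
      exact le_trans h1 zero_le

end DensityBasics

section FiniteStuff
variable {X : Type u} [TopologicalSpace X] [T2Space X]

lemma dense_eq_univ_of_finite {s : Set X} (hfin : s.Finite) (hs : Dense s) : s = Set.univ := by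
  have hclosed : IsClosed s := hfin.isClosed
  rw [← hclosed.closure_eq]
  exact hs.closure_eq

lemma aleph0_le_tdensity_of_infinite (h : Infinite X) : ℵ₀ ≤ tdensity X := by
  apply le_tdensity
  intro s hs
  rw [Cardinal.aleph0_le_mk_iff, Set.infinite_coe_iff]
  intro hfin
  have := dense_eq_univ_of_finite hfin hs
  rw [this] at hfin
  exact (Set.infinite_univ (α := X)).elim hfin -- univ infinite

lemma tweight_le_tdensity_of_finite (h : Finite X) : tweight X ≤ tdensity X := by
  have hdt : DiscreteTopology X := by
    rw [discreteTopology_iff_forall_isClosed]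
    intro s
    exact s.toFinite.isClosed
  have hbasis : IsTopologicalBasis (range fun x : X => ({x} : Set X)) := by
    apply isTopologicalBasis_of_isOpen_of_nhds
    · rintro u ⟨x, rfl⟩; exact isOpen_discrete _
    · intro a u ha _
      exact ⟨{a}, ⟨a, rfl⟩, rfl, singleton_subset_iff.mpr ha⟩
  have h1 : tweight X ≤ #X := le_trans (tweight_le_of_basis hbasis) mk_range_le
  have h2 : #X ≤ tdensity X := by
    apply le_tdensity
    intro s hs
    rw [dense_eq_univ_of_finite s.toFinite hs, Cardinal.mk_univ]
  exact le_trans h1 h2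

end FiniteStuff

lemma mk_finset_le (α : Type u) : #(Finset α) ≤ max ℵ₀ #α := by
  classical
  have hsurj : Surjective (fun l : List α => l.toFinset) := fun s => ⟨s.toList, s.toList_toFinset⟩
  exact le_trans (mk_le_of_surjective hsurj) (mk_list_le_max α)

section Pick
attribute [local instance] Classical.propDecidable
variable {α : Type*}

def pickP (P : α → Prop) : List α → Option α
  | [] => none
  | a :: l => if P a then some a else pickP P l

lemma pickP_eq_none {P : α → Prop} : ∀ {l : List α}, (∀ a ∈ l, ¬ P a) → pickP P l = none
  | [], _ => rfl
  | a :: l, h => by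
    have ha : ¬ P a := h a List.mem_cons_self
    simp only [pickP, if_neg ha]
    exact pickP_eq_none fun b hb => h b (List.mem_cons_of_mem a hb)

lemma pickP_eq_some_of_unique {P : α → Prop} {a : α} :
    ∀ {l : List α}, a ∈ l → P a → (∀ b ∈ l, P b → b = a) → pickP P l = some a
  | [], h, _, _ => absurd h List.not_mem_nil
  | b :: l, h, hPa, huniq => by
    by_cases hb : P b
    · have hba : b = a := huniq b List.mem_cons_self hb
      subst hba
      simp only [pickP, if_pos hb]
    · have hne : a ≠ b := fun h' => hb (h' ▸ hPa)
      have hmem : a ∈ l := by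
        rcases List.mem_cons.mp h with h' | h'
        · exact absurd h' hne
        · exact h'
      simp only [pickP, if_neg hb]
      exact pickP_eq_some_of_unique hmem hPa fun c hc hPc => huniq c (List.mem_cons_of_mem b hc) hPc

end Pick

section Patterns
attribute [local instance] Classical.propDecidable
variable {ι : Type u} {Y : ι → Type u} [∀ i, Nonempty (Y i)] {B T : Type u}

abbrev PatEntry (T : Type u) : Type u := Finset T × Finset T × T

def entryMatches (c : ι → Set T) (i : ι) (p : PatEntry T) : Prop :=
  ↑p.1 ⊆ c i ∧ ∀ t ∈ p.2.1, t ∉ c i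

abbrev PatList (B T : Type u) : Type u := List (B × List (PatEntry T))

def pointOf (z : ∀ i, Y i) (E : Set ι) (b : ι → B) (c : ι → Set T) (e : ∀ i, Y i → T)
    (Γ : PatList B T) : ∀ i, Y i := fun i =>
  if i ∈ E then
    match pickP (fun q => q.1 = b i) Γ with
    | none => z i
    | some q =>
      match pickP (entryMatches c i) q.2 with
      | none => z i
      | some p => Function.invFun (e i) p.2.2
  else z i

lemma pointOf_eq_z_of_not_mem {z : ∀ i, Y i} {E : Set ι} {b : ι → B} {c : ι → Set T}
    {e : ∀ i, Y i → T} {Γ : PatList B T} {i : ι} (h : i ∉ E) :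
    pointOf z E b c e Γ i = z i := by
  simp only [pointOf, if_neg h]

lemma pointOf_eq_z_of_block {z : ∀ i, Y i} {E : Set ι} {b : ι → B} {c : ι → Set T}
    {e : ∀ i, Y i → T} {Γ : PatList B T} {i : ι} (h : ∀ q ∈ Γ, q.1 ≠ b i) :
    pointOf z E b c e Γ i = z i := by
  by_cases hE : i ∈ E
  · simp only [pointOf, if_pos hE, pickP_eq_none h]
  · exact pointOf_eq_z_of_not_mem hE

lemma exists_pointOf [Nonempty T] (z : ∀ i, Y i) (E : Set ι) (b : ι → B) (c : ι → Set T)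
    (e : ∀ i, Y i → T) (hcinj : InjOn c E) (he : ∀ i, Injective (e i))
    (J : Finset ι) (hJE : ↑J ⊆ E) (x₀ : ∀ i, Y i) :
    ∃ Γ : PatList B T, ∀ i ∈ J, pointOf z E b c e Γ i = x₀ i := by
  set wit : ι → ι → T := fun i j =>
    if h : ∃ t, (t ∈ c i ∧ t ∉ c j) ∨ (t ∈ c j ∧ t ∉ c i) then h.choose
    else Classical.arbitrary T with hwit
  set F : Finset T := (J ×ˢ J).image fun p => wit p.1 p.2 with hF
  set ent : ι → PatEntry T := fun i => (F.filter (· ∈ c i), F.filter (· ∉ c i), e i (x₀ i))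
    with hent
  have key : ∀ i ∈ J, ∀ j ∈ J, (entryMatches c j (ent i) ↔ c i = c j) := by
    intro i hi j hj
    constructor
    · rintro ⟨h1, h2⟩
      by_contra hne
      have hex : ∃ t, (t ∈ c i ∧ t ∉ c j) ∨ (t ∈ c j ∧ t ∉ c i) := by
        by_contra hno
        push_neg at hno
        exact hne (Set.ext fun t => ⟨fun ht => (hno t).1 ht, fun ht => (hno t).2 ht⟩)
      have hmem : wit i j ∈ F := by
        rw [hF]
        exact Finset.mem_image.mpr ⟨(i, j), Finset.mem_product.mpr ⟨hi, hj⟩, rfl⟩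
      have hwij : wit i j = hex.choose := by
        simp only [hwit]
        exact dif_pos hex
      rw [hwij] at hmem
      rcases hex.choose_spec with ⟨hti, htj⟩ | ⟨htj, hti⟩
      · have hmem2 : hex.choose ∈ (ent i).1 := Finset.mem_filter.mpr ⟨hmem, hti⟩
        exact htj (h1 hmem2)
      · have hmem2 : hex.choose ∈ (ent i).2.1 := Finset.mem_filter.mpr ⟨hmem, hti⟩
        exact (h2 _ hmem2) htj
    · intro hcc
      constructor
      · intro t ht
        have := Finset.mem_filter.mp ht
        rw [← hcc]
        exact this.2
      · intro t ht
        have := Finset.mem_filter.mp ht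
        rw [← hcc]
        exact this.2
  classical
  set Lof : B → List (PatEntry T) := fun β => (J.filter (fun j => b j = β)).toList.map ent
    with hLof
  refine ⟨(J.image b).toList.map (fun β => (β, Lof β)), ?_⟩
  intro i hi
  have hiE : i ∈ E := hJE hi
  have hpick1 : pickP (fun q => q.1 = b i) ((J.image b).toList.map (fun β => (β, Lof β)))
      = some (b i, Lof (b i)) := by
    apply pickP_eq_some_of_unique
    · rw [List.mem_map]
      exact ⟨b i, by rw [Finset.mem_toList]; exact Finset.mem_image_of_mem b hi, rfl⟩
    · rfl
    · rintro q hq hq1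
      rw [List.mem_map] at hq
      obtain ⟨β, _, rfl⟩ := hq
      simp only at hq1
      rw [hq1]
  have hpick2 : pickP (entryMatches c i) (Lof (b i)) = some (ent i) := by
    apply pickP_eq_some_of_unique
    · rw [hLof, List.mem_map]
      exact ⟨i, by rw [Finset.mem_toList, Finset.mem_filter]; exact ⟨hi, rfl⟩, rfl⟩
    · exact (key i hi i hi).mpr rfl
    · rintro p hp hmatch
      rw [hLof, List.mem_map] at hp
      obtain ⟨j, hj, rfl⟩ := hp
      rw [Finset.mem_toList, Finset.mem_filter] at hj
      have : c j = c i := (key j hj.1 i hi).mp hmatch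
      have hji : j = i := hcinj (hJE hj.1) hiE this
      rw [hji]
  simp only [pointOf, if_pos hiE, hpick1, hpick2]
  exact Function.leftInverse_invFun (he i) (x₀ i)

end Patterns

section PinSets
variable {ι : Type u} {Y : ι → Type u} [∀ i, TopologicalSpace (Y i)]

def pinSet (z : ∀ i, Y i) (S : Set ι) : Set (∀ i, Y i) := {x | ∀ i ∈ S, x i = z i}

lemma isClosed_pinSet [∀ i, T2Space (Y i)] (z : ∀ i, Y i) (S : Set ι) :
    IsClosed (pinSet z S) := by
  have h : pinSet z S = ⋂ i ∈ S, {x : ∀ i, Y i | x i = z i} := by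
    ext x; simp [pinSet]
  rw [h]
  exact isClosed_biInter fun i _ => isClosed_eq (continuous_apply i) continuous_const

lemma pinSet_anti {z : ∀ i, Y i} {S S' : Set ι} (h : S ⊆ S') : pinSet z S' ⊆ pinSet z S :=
  fun _ hx i hi => hx i (h hi)

omit [∀ i, TopologicalSpace (Y i)] in
lemma pinSet_univ_empty (z : ∀ i, Y i) : pinSet z (∅ : Set ι) = Set.univ := by
  ext x; simp [pinSet]

/-- finite-deviation points are dense in a pin set -/
lemma pin_subset_closure_sigma (z : ∀ i, Y i) (S : Set ι) :
    pinSet z S ⊆ closure {y | y ∈ pinSet z S ∧ {i | y i ≠ z i}.Finite} := by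
  classical
  intro x hx
  rw [mem_closure_iff]
  intro O hO hxO
  obtain ⟨I, u, hu, hpi⟩ := (isOpen_pi_iff.mp hO) x hxO
  refine ⟨fun i => if i ∈ I then x i else z i, hpi ?_, ?_, ?_⟩
  · intro i hi
    simp only []
    rw [show (if i ∈ I then x i else z i) = x i from if_pos hi]
    exact (hu i hi).2
  · intro i hi
    by_cases h : i ∈ I
    · show (if i ∈ I then x i else z i) = z i
      rw [if_pos h]; exact hx i hi
    · show (if i ∈ I then x i else z i) = z i
      rw [if_neg h]
  · apply Set.Finite.subset I.finite_toSet
    intro i hi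
    simp only [mem_setOf_eq] at hi
    by_contra hiI
    exact hi (if_neg hiI)

variable {X : Type u} [TopologicalSpace X] [T2Space X]
variable [∀ i, T2Space (Y i)] [CompactSpace (∀ i, Y i)]

lemma exists_maximal_pin (g : (∀ i, Y i) → X) (hgc : Continuous g) (hgs : Surjective g)
    (z : ∀ i, Y i) :
    ∃ S : Set ι, g '' pinSet z S = Set.univ ∧
      ∀ i ∉ S, g '' pinSet z (insert i S) ≠ Set.univ := by
  set 𝒮 : Set (Set ι) := {S | g '' pinSet z S = Set.univ} with h𝒮
  have hempty : (∅ : Set ι) ∈ 𝒮 := by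
    simp only [h𝒮, mem_setOf_eq, pinSet_univ_empty, image_univ]
    exact hgs.range_eq
  have hchain : ∀ c ⊆ 𝒮, IsChain (· ⊆ ·) c → c.Nonempty → ∃ ub ∈ 𝒮, ∀ s ∈ c, s ⊆ ub := by
    intro c hc hchain hcne
    refine ⟨⋃₀ c, ?_, fun s hs => subset_sUnion_of_mem hs⟩
    simp only [h𝒮, mem_setOf_eq]
    apply eq_univ_of_forall
    intro y
    haveI : Nonempty ↥c := hcne.to_subtype
    set t : ↥c → Set (∀ i, Y i) := fun S => pinSet z S.1 ∩ g ⁻¹' {y} with ht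
    have hdir : Directed (· ⊇ ·) t := by
      intro a b
      rcases hchain.total a.2 b.2 with h | h
      · exact ⟨b, inter_subset_inter_left _ (pinSet_anti h), subset_rfl⟩
      · exact ⟨a, subset_rfl, inter_subset_inter_left _ (pinSet_anti h)⟩
    have hne : ∀ S : ↥c, (t S).Nonempty := by
      intro S
      have hS := hc S.2
      simp only [h𝒮, mem_setOf_eq] at hS
      have : y ∈ g '' pinSet z S.1 := hS ▸ mem_univ y
      obtain ⟨x, hx, hgx⟩ := this
      exact ⟨x, hx, by simpa using hgx⟩
    have hcl : ∀ S : ↥c, IsClosed (t S) :=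
      fun S => (isClosed_pinSet z S.1).inter (isClosed_singleton.preimage hgc)
    have hcomp : ∀ S : ↥c, IsCompact (t S) := fun S => (hcl S).isCompact
    obtain ⟨x, hx⟩ := IsCompact.nonempty_iInter_of_directed_nonempty_isCompact_isClosed
      t hdir hne hcomp hcl
    refine ⟨x, ?_, ?_⟩
    · intro i hi
      obtain ⟨S, hSc, hiS⟩ := hi
      have := mem_iInter.mp hx ⟨S, hSc⟩
      exact this.1 i hiS
    · have := mem_iInter.mp hx ⟨hcne.choose, hcne.choose_spec⟩
      simpa using this.2
  obtain ⟨m, _, hm⟩ := zorn_subset_nonempty 𝒮 hchain ∅ hempty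
  refine ⟨m, hm.1, ?_⟩
  intro i hi hcontra
  have : insert i m ⊆ m := hm.2 (show insert i m ∈ 𝒮 from hcontra) (subset_insert i m)
  exact hi (this (mem_insert i m))

end PinSets

lemma mk_list_list_le {α : Type u} {c : Cardinal.{u}} (hα : #α ≤ c) (hc : ℵ₀ ≤ c) :
    #(List (List α)) ≤ c := by
  have h1 : #(List α) ≤ c := le_trans (mk_list_le_max α) (max_le hc hα)
  exact le_trans (mk_list_le_max _) (max_le hc h1)

lemma isOpen_listInter {Z : Type u} [TopologicalSpace Z] (θ : List (Set Z))
    (h : ∀ s ∈ θ, IsOpen s) : IsOpen {x : Z | ∀ s ∈ θ, x ∈ s} := by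
  induction θ with
  | nil => simpa using isOpen_univ
  | cons a l ih =>
    have : {x : Z | ∀ s ∈ a :: l, x ∈ s} = a ∩ {x | ∀ s ∈ l, x ∈ s} := by
      ext x
      simp only [List.mem_cons, mem_setOf_eq, mem_inter_iff]
      constructor
      · intro h; exact ⟨h a (Or.inl rfl), fun s hs => h s (Or.inr hs)⟩
      · rintro ⟨h1, h2⟩ s (rfl | hs)
        exacts [h1, h2 s hs]
    rw [this]
    exact (h a List.mem_cons_self).inter (ih fun s hs => h s (List.mem_cons_of_mem a hs))

section WeightBound
variable {ι : Type u} {Y : ι → Type u} [∀ i, TopologicalSpace (Y i)]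
  [∀ i, T2Space (Y i)] [CompactSpace (∀ i, Y i)]
  {X : Type u} [TopologicalSpace X] [T2Space X]

lemma tweight_le_pin (g : (∀ i, Y i) → X) (hgc : Continuous g)
    (z : ∀ i, Y i) (Sstar : Set ι)
    (hsurj : g '' pinSet z Sstar = Set.univ)
    (ℬ : ∀ i, Set (Set (Y i))) (hℬ : ∀ i, IsTopologicalBasis (ℬ i)) :
    tweight X ≤ max ℵ₀ #(Σ i : ↥(Sstarᶜ), ↥(ℬ i.1)) := by
  classical
  set E : Set ι := Sstarᶜ with hE
  set P0 : Set (∀ i, Y i) := pinSet z Sstar with hP0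
  have hP0closed : IsClosed P0 := isClosed_pinSet z Sstar
  set Sub : Set (Set (∀ i, Y i)) :=
    {W | ∃ i ∈ E, ∃ V ∈ ℬ i, W = (fun x : ∀ j, Y j => x i) ⁻¹' V} with hSub
  have hSubOpen : ∀ W ∈ Sub, IsOpen W := by
    rintro W ⟨i, _, V, hV, rfl⟩
    exact ((hℬ i).isOpen hV).preimage (continuous_apply i)
  set IntOf : List ↥Sub → Set (∀ i, Y i) := fun θ => {x | ∀ q ∈ θ, x ∈ q.1} with hIntOf
  have hIntOpen : ∀ θ, IsOpen (IntOf θ) := by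
    intro θ
    have heq : IntOf θ = {x | ∀ s ∈ θ.map Subtype.val, x ∈ s} := by
      ext x
      simp only [hIntOf, mem_setOf_eq, List.mem_map]
      constructor
      · rintro h s ⟨q, hq, rfl⟩; exact h q hq
      · intro h q hq; exact h q.1 ⟨q, hq, rfl⟩
    rw [heq]
    apply isOpen_listInter
    rintro s hs
    rw [List.mem_map] at hs
    obtain ⟨q, _, rfl⟩ := hs
    exact hSubOpen q.1 q.2
  set UnOf : List (List ↥Sub) → Set (∀ i, Y i) := fun G => ⋃ θ ∈ G, IntOf θ with hUnOf
  have hUnOpen : ∀ G, IsOpen (UnOf G) := fun G => isOpen_biUnion fun θ _ => hIntOpen θ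
  set CandOf : List (List ↥Sub) → Set X := fun G => (g '' (P0 \ UnOf G))ᶜ with hCandOf
  have hCandOpen : ∀ G, IsOpen (CandOf G) := by
    intro G
    rw [hCandOf, isOpen_compl_iff]
    exact ((hP0closed.sdiff (hUnOpen G)).isCompact.image hgc).isClosed
  have hbasis : IsTopologicalBasis (Set.range CandOf) := by
    apply isTopologicalBasis_of_isOpen_of_nhds
    · rintro u ⟨G, rfl⟩; exact hCandOpen G
    · intro a O haO hO
      set fib : Set (∀ i, Y i) := P0 ∩ g ⁻¹' {a} with hfib
      have hfibsub : fib ⊆ P0 := inter_subset_left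
      have hfibcomp : IsCompact fib :=
        (hP0closed.inter (isClosed_singleton.preimage hgc)).isCompact
      have hθ : ∀ p : ↥fib, ∃ θ : List ↥Sub,
          p.1 ∈ IntOf θ ∧ IntOf θ ∩ P0 ⊆ g ⁻¹' O := by
        rintro ⟨p, hpP0, hpfib⟩
        have hpO : p ∈ g ⁻¹' O := by
          simp only [mem_preimage]
          have hgp : g p = a := by simpa using hpfib
          rw [hgp]; exact haO
        obtain ⟨I, u, hu, hpi⟩ := (isOpen_pi_iff.mp (hO.preimage hgc)) p hpO
        have hsel : ∀ i : ι, i ∈ I ∧ i ∈ E → ∃ V ∈ ℬ i, p i ∈ V ∧ V ⊆ u i := by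
          rintro i ⟨hiI, _⟩
          exact (hℬ i).exists_subset_of_mem_open (hu i hiI).2 (hu i hiI).1
        choose v hv1 hv2 hv3 using hsel
        set f : ι → Option ↥Sub := fun i =>
          if h : i ∈ I ∧ i ∈ E then
            some ⟨(fun x : ∀ j, Y j => x i) ⁻¹' (v i h),
              ⟨i, h.2, v i h, hv1 i h, rfl⟩⟩
          else none with hf
        refine ⟨I.toList.filterMap f, ?_, ?_⟩
        · intro q hq
          rw [List.mem_filterMap] at hq
          obtain ⟨i, _, hfi⟩ := hq
          by_cases h : i ∈ I ∧ i ∈ E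
          · rw [hf] at hfi
            simp only [dif_pos h] at hfi
            cases hfi
            exact hv2 i h
          · rw [hf] at hfi
            simp only [dif_neg h] at hfi
            exact absurd hfi (by simp)
        · rintro x ⟨hxInt, hxP0⟩
          apply hpi
          intro i hiI
          rw [Finset.mem_coe] at hiI
          by_cases hiE : i ∈ E
          · have h : i ∈ I ∧ i ∈ E := ⟨hiI, hiE⟩
            have hfi : f i = some ⟨(fun x : ∀ j, Y j => x i) ⁻¹' (v i h),
                ⟨i, h.2, v i h, hv1 i h, rfl⟩⟩ := by
              rw [hf]; exact dif_pos h
            have hqmem : (⟨(fun x : ∀ j, Y j => x i) ⁻¹' (v i h),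
                ⟨i, h.2, v i h, hv1 i h, rfl⟩⟩ : ↥Sub) ∈ I.toList.filterMap f := by
              rw [List.mem_filterMap]
              exact ⟨i, by rw [Finset.mem_toList]; exact hiI, hfi⟩
            have := hxInt _ hqmem
            exact hv3 i h this
          · have hiS : i ∈ Sstar := by
              by_contra hc
              exact hiE hc
            have hx : x i = z i := hxP0 i hiS
            have hp : p i = z i := hpP0 i hiS
            rw [hx, ← hp]
            exact (hu i hiI).2
      choose θfun hθ1 hθ2 using hθ
      have hfibne : fib.Nonempty := by
        have : a ∈ g '' P0 := hsurj ▸ mem_univ a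
        obtain ⟨x, hx, hgx⟩ := this
        exact ⟨x, hx, by simpa using hgx⟩
      have hcover : fib ⊆ ⋃ p : ↥fib, IntOf (θfun p) := by
        intro x hx
        exact mem_iUnion.mpr ⟨⟨x, hx⟩, hθ1 ⟨x, hx⟩⟩
      obtain ⟨t, ht⟩ := hfibcomp.elim_finite_subcover (fun p : ↥fib => IntOf (θfun p))
        (fun p => hIntOpen _) hcover
      set G : List (List ↥Sub) := t.toList.map θfun with hG
      refine ⟨CandOf G, ⟨G, rfl⟩, ?_, ?_⟩
      · rw [hCandOf]
        simp only [mem_compl_iff]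
        rintro ⟨x, ⟨hxP0, hxnot⟩, hgx⟩
        apply hxnot
        have hxfib : x ∈ fib := ⟨hxP0, by simpa using hgx⟩
        have := ht hxfib
        rw [mem_iUnion₂] at this
        obtain ⟨p, hp, hxp⟩ := this
        rw [hUnOf]
        rw [mem_iUnion₂]
        exact ⟨θfun p, by rw [hG, List.mem_map]; exact ⟨p, by rw [Finset.mem_toList]; exact hp, rfl⟩, hxp⟩
      · intro y hy
        have hyuniv : y ∈ g '' P0 := hsurj ▸ mem_univ y
        obtain ⟨x, hxP0, hgx⟩ := hyuniv
        rw [hCandOf, mem_compl_iff] at hy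
        have hxU : x ∈ UnOf G := by
          by_contra hc
          exact hy ⟨x, ⟨hxP0, hc⟩, hgx⟩
        rw [hUnOf, mem_iUnion₂] at hxU
        obtain ⟨θ, hθG, hxθ⟩ := hxU
        rw [hG, List.mem_map] at hθG
        obtain ⟨p, _, rfl⟩ := hθG
        have := hθ2 p ⟨hxθ, hxP0⟩
        rw [← hgx]
        exact this
  calc tweight X ≤ #(Set.range CandOf) := tweight_le_of_basis hbasis
    _ ≤ #(List (List ↥Sub)) := mk_range_le
    _ ≤ max ℵ₀ #(Σ i : ↥(Sstarᶜ), ↥(ℬ i.1)) := by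
        apply mk_list_list_le _ (le_max_left _ _)
        have hsub : Sub ⊆ Set.range (fun q : Σ i : ↥(Sstarᶜ), ↥(ℬ i.1) =>
            (fun x : ∀ j, Y j => x q.1.1) ⁻¹' (q.2.1 : Set (Y q.1.1))) := by
          rintro W ⟨i, hiE, V, hV, rfl⟩
          exact ⟨⟨⟨i, hiE⟩, ⟨V, hV⟩⟩, rfl⟩
        calc #↥Sub ≤ #↥(Set.range _) := mk_le_mk_of_subset hsub
          _ ≤ #(Σ i : ↥(Sstarᶜ), ↥(ℬ i.1)) := mk_range_le
          _ ≤ max ℵ₀ _ := le_max_right _ _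

end WeightBound

section EBound
variable {ι : Type u} {Y : ι → Type u} [∀ i, TopologicalSpace (Y i)]
  [∀ i, T2Space (Y i)] [CompactSpace (∀ i, Y i)]
  {X : Type u} [TopologicalSpace X] [T2Space X] [CompactSpace X]

lemma mk_E_le (g : (∀ i, Y i) → X) (hgc : Continuous g) (z : ∀ i, Y i) (Sstar : Set ι)
    (hsurj : g '' pinSet z Sstar = Set.univ)
    (hmax : ∀ i ∉ Sstar, g '' pinSet z (insert i Sstar) ≠ Set.univ)
    {R : Set X} (hR : Dense R) :
    #↥(Sstarᶜ) ≤ 2 ^ #↥R * ℵ₀ := by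
  classical
  set E : Set ι := Sstarᶜ with hE
  set P0 : Set (∀ i, Y i) := pinSet z Sstar with hP0
  set σstar : Set (∀ i, Y i) := {y | y ∈ pinSet z Sstar ∧ {i | y i ≠ z i}.Finite} with hσstar
  have hσdense : Dense (g '' σstar) := by
    rw [dense_iff_closure_eq]
    apply eq_univ_of_univ_subset
    calc Set.univ = g '' P0 := hsurj.symm
      _ ⊆ g '' closure σstar := image_mono (pin_subset_closure_sigma z Sstar)
      _ ⊆ closure (g '' σstar) := image_closure_subset_closure_image hgc
  set F : ↥E → Set X := fun i => g '' pinSet z (insert i.1 Sstar) with hF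
  have hFclosed : ∀ i, IsClosed (F i) :=
    fun i => ((isClosed_pinSet z _).isCompact.image hgc).isClosed
  have hFne : ∀ i, F i ≠ Set.univ := fun i => hmax i.1 i.2
  have hp : ∀ i, ∃ p, p ∉ F i := fun i => (ne_univ_iff_exists_notMem _).mp (hFne i)
  choose p hpF using hp
  have hV : ∀ i : ↥E, ∃ V : Set X, IsOpen V ∧ p i ∈ V ∧ closure V ⊆ (F i)ᶜ := by
    intro i
    have hmem : (F i)ᶜ ∈ nhds (p i) := (hFclosed i).isOpen_compl.mem_nhds (hpF i)
    obtain ⟨N, ⟨hN1, hN2⟩, hN3⟩ := (closed_nhds_basis (p i)).mem_iff.mp hmem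
    refine ⟨interior N, isOpen_interior, mem_interior_iff_mem_nhds.mpr hN1, ?_⟩
    calc closure (interior N) ⊆ closure N := closure_mono interior_subset
      _ = N := hN2.closure_eq
      _ ⊆ (F i)ᶜ := hN3
  choose V hVopen hpV hVF using hV
  set m : ↥E → Set ↥R := fun i => {r : ↥R | (r : X) ∈ V i} with hm
  have hRV : ∀ i j : ↥E, m j = m i → R ∩ V j = R ∩ V i := by
    intro i j h
    ext x
    constructor
    · rintro ⟨hxR, hxV⟩
      have : (⟨x, hxR⟩ : ↥R) ∈ m j := hxV
      rw [h] at this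
      exact ⟨hxR, this⟩
    · rintro ⟨hxR, hxV⟩
      have : (⟨x, hxR⟩ : ↥R) ∈ m i := hxV
      rw [← h] at this
      exact ⟨hxR, this⟩
  have hfibfin : ∀ i : ↥E, {j : ↥E | m j = m i}.Finite := by
    intro i
    set W : Set X := interior (closure (R ∩ V i)) with hW
    have hWopen : IsOpen W := isOpen_interior
    have hVW : ∀ j : ↥E, m j = m i → V j ⊆ W := by
      intro j hj
      have h1 : V j ⊆ closure (V j ∩ R) := hR.open_subset_closure_inter (hVopen j)
      have h2 : V j ∩ R = R ∩ V i := by rw [inter_comm]; exact hRV i j hj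
      rw [h2] at h1
      exact interior_maximal h1 (hVopen j)
    have hWF : ∀ j : ↥E, m j = m i → W ∩ F j = ∅ := by
      intro j hj
      have h1 : W ⊆ closure (R ∩ V j) := by
        rw [hRV i j hj]; exact interior_subset
      have h2 : closure (R ∩ V j) ⊆ closure (V j) := closure_mono inter_subset_right
      rw [eq_empty_iff_forall_notMem]
      rintro x ⟨hxW, hxF⟩
      exact (hVF j (h2 (h1 hxW))) hxF
    have hWne : W.Nonempty := ⟨p i, hVW i rfl (hpV i)⟩
    obtain ⟨q, hqW, hqσ⟩ := hσdense.inter_open_nonempty W hWopen hWne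
    obtain ⟨y, hyσ, hgy⟩ := hqσ
    have hdev : {i : ι | y i ≠ z i}.Finite := hyσ.2
    apply Set.Finite.subset (Set.Finite.preimage Subtype.val_injective.injOn hdev)
    intro j hj
    simp only [mem_setOf_eq] at hj
    simp only [mem_preimage, mem_setOf_eq]
    intro hyz
    have hyins : y ∈ pinSet z (insert j.1 Sstar) := by
      intro k hk
      rcases hk with rfl | hk
      · exact hyz
      · exact hyσ.1 k hk
    have : q ∈ F j := ⟨y, hyins, hgy⟩
    have := hWF j hj
    rw [eq_empty_iff_forall_notMem] at this
    exact this q ⟨hqW, ‹q ∈ F j›⟩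
  -- count
  set m' : ↥E → ↥(Set.range m) := rangeFactorization m with hm'
  have hEsig : #↥E = Cardinal.sum (fun b : ↥(Set.range m) => #{j : ↥E // m' j = b}) := by
    rw [← Cardinal.mk_sigma]
    exact (Cardinal.mk_congr (Equiv.sigmaFiberEquiv m')).symm
  have hbound : ∀ b : ↥(Set.range m), #{j : ↥E // m' j = b} ≤ ℵ₀ := by
    intro b
    obtain ⟨i0, hi0⟩ := b.2
    have : {j : ↥E // m' j = b} ≃ {j : ↥E // j ∈ {j | m j = m i0}} := by
      apply Equiv.subtypeEquivRight
      intro j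
      simp only [hm', rangeFactorization, mem_setOf_eq]
      constructor
      · intro h
        have := congrArg Subtype.val h
        simp at this
        rw [this, hi0]
      · intro h
        apply Subtype.ext
        simp [h, hi0]
    rw [Cardinal.mk_congr this]
    have hfin : ({j : ↥E | m j = m i0}).Finite := hfibfin i0
    haveI : Finite {j : ↥E // j ∈ {j | m j = m i0}} := hfin.to_subtype
    exact le_of_lt (Cardinal.lt_aleph0_of_finite _)
  calc #↥E = _ := hEsig
    _ ≤ Cardinal.sum (fun _ : ↥(Set.range m) => ℵ₀) := Cardinal.sum_le_sum _ _ hbound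
    _ = #↥(Set.range m) * ℵ₀ := by rw [Cardinal.sum_const']
    _ ≤ #(Set ↥R) * ℵ₀ := by
        apply mul_le_mul'
        · calc #↥(Set.range m) ≤ #↥(Set.univ : Set (Set ↥R)) := mk_le_mk_of_subset (subset_univ _)
            _ = #(Set ↥R) := Cardinal.mk_univ
        · exact le_rfl
    _ = 2 ^ #↥R * ℵ₀ := by rw [Cardinal.mk_set]

end EBound

section MainConstruction

theorem main_construction {ι : Type u} {Y : ι → Type u}
    [∀ i, TopologicalSpace (Y i)] [∀ i, CompactSpace (Y i)] [∀ i, T2Space (Y i)]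
    [∀ i, Nonempty (Y i)]
    {X : Type u} [TopologicalSpace X] [CompactSpace X] [T2Space X]
    (g : (∀ i, Y i) → X) (hgc : Continuous g) (hgs : Surjective g)
    (ν lam : Cardinal.{u}) (hν : ℵ₀ ≤ ν)
    (hdν : tdensity X ≤ ν)
    (hwY : ∀ i, tweight (Y i) ≤ ν) (hcY : ∀ i, #(Y i) ≤ ν)
    (hνlam : ν < lam) (hlamw : lam ≤ tweight X) :
    ∃ D : Set X, Dense D ∧ tdensity ↥D = lam := by
  classical
  have hlaminf : ℵ₀ ≤ lam := le_of_lt (lt_of_le_of_lt hν hνlam)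
  obtain ⟨z⟩ : Nonempty (∀ i, Y i) := inferInstance
  obtain ⟨Sstar, hsurj, hmax⟩ := exists_maximal_pin g hgc hgs z
  set E : Set ι := Sstarᶜ with hE
  -- dense set of size ≤ ν
  obtain ⟨R, hR, hRcard⟩ := exists_dense_card X
  have hRν : #↥R ≤ ν := le_of_eq_of_le hRcard hdν
  -- lower bound on E
  have hElam : lam ≤ #↥E := by
    by_contra hlt
    push_neg at hlt
    have hbases : ∀ i, ∃ B : Set (Set (Y i)), IsTopologicalBasis B ∧ #B = tweight (Y i) :=
      fun i => exists_basis_card (Y i)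
    choose ℬ hℬbasis hℬcard using hbases
    have hbound := tweight_le_pin g hgc z Sstar hsurj ℬ hℬbasis
    have hsig : #(Σ i : ↥(Sstarᶜ), ↥(ℬ i.1)) < lam := by
      rw [Cardinal.mk_sigma]
      calc Cardinal.sum (fun i : ↥(Sstarᶜ) => #↥(ℬ i.1))
          ≤ Cardinal.sum (fun _ : ↥(Sstarᶜ) => ν) := by
            apply Cardinal.sum_le_sum
            intro i
            rw [hℬcard]
            exact hwY i.1
        _ = #↥(Sstarᶜ) * ν := Cardinal.sum_const' _ ν
        _ < lam := Cardinal.mul_lt_of_lt hlaminf hlt hνlam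
    have : tweight X < lam :=
      lt_of_le_of_lt hbound (max_lt (lt_of_le_of_lt hν hνlam) hsig)
    exact absurd hlamw (not_le.mpr this)
  -- upper bound on E
  have hE2ν : #↥E ≤ 2 ^ ν := by
    have h1 := mk_E_le g hgc z Sstar hsurj hmax hR
    have h2 : (2 : Cardinal.{u}) ^ #↥R * ℵ₀ ≤ 2 ^ ν * ℵ₀ := by
      apply mul_le_mul'
      · exact Cardinal.power_le_power_left (by norm_num) hRν
      · exact le_rfl
    have h3 : (2 : Cardinal.{u}) ^ ν * ℵ₀ = 2 ^ ν := by
      have hp : ℵ₀ ≤ (2 : Cardinal.{u}) ^ ν := le_trans hν (le_of_lt (Cardinal.cantor ν))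
      rw [Cardinal.mul_eq_max hp le_rfl]
      exact max_eq_left hp
    exact le_trans h1 (le_of_le_of_eq h2 h3)
  -- coding data
  set T : Type u := ν.out with hTdef
  have hTcard : #T = ν := mk_out ν
  haveI hTne : Nonempty T := by
    rw [← Cardinal.mk_ne_zero_iff, hTcard]
    exact ne_of_gt (lt_of_lt_of_le Cardinal.aleph0_pos hν)
  have hcEx : Nonempty (↥E ↪ Set T) := by
    rw [← Cardinal.le_def]
    rwa [Cardinal.mk_set, hTcard]
  obtain ⟨cE⟩ := hcEx
  set c : ι → Set T := fun i => if h : i ∈ E then cE ⟨i, h⟩ else ∅ with hc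
  have hcinj : InjOn c E := by
    intro i hi j hj hij
    rw [hc] at hij
    simp only [dif_pos hi, dif_pos hj] at hij
    exact congrArg Subtype.val (cE.injective hij)
  have heEx : ∀ i, Nonempty (Y i ↪ T) := by
    intro i
    rw [← Cardinal.le_def, hTcard]
    exact hcY i
  have eEmb : ∀ i, Y i ↪ T := fun i => Classical.choice (heEx i)
  set e : ∀ i, Y i → T := fun i => (eEmb i : Y i → T) with he
  have heinj : ∀ i, Injective (e i) := fun i => (eEmb i).injective
  set B : Type u := lam.out with hBdef
  have hBcard : #B = lam := mk_out lam
  haveI hBne : Nonempty B := by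
    rw [← Cardinal.mk_ne_zero_iff, hBcard]
    exact ne_of_gt (lt_of_lt_of_le Cardinal.aleph0_pos hlaminf)
  have hjEx : Nonempty (B ↪ ↥E) := by
    rw [← Cardinal.le_def, hBcard]
    exact hElam
  obtain ⟨j⟩ := hjEx
  have hjinj : Injective (fun β : B => ((j β : ↥E) : ι)) :=
    Subtype.val_injective.comp j.injective
  set b : ι → B := Function.invFun (fun β : B => ((j β : ↥E) : ι)) with hb
  have hbj : ∀ β : B, b ((j β : ↥E) : ι) = β := Function.leftInverse_invFun hjinj
  have hwitE : ∀ β : B, ((j β : ↥E) : ι) ∈ E := fun β => (j β).2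
  -- the dense set
  set pt : PatList B T → ∀ i, Y i := pointOf z E b c e with hpt
  set D : Set X := g '' (Set.range pt) with hD
  have hP0 : ∀ Γ, pt Γ ∈ pinSet z Sstar := by
    intro Γ i hi
    apply pointOf_eq_z_of_not_mem
    rw [hE]
    simp only [mem_compl_iff, not_not]
    exact hi
  -- density
  have hDdense : Dense D := by
    rw [dense_iff_inter_open]
    intro U hU hUne
    obtain ⟨o, hoU⟩ := hUne
    have : o ∈ g '' pinSet z Sstar := hsurj ▸ mem_univ o
    obtain ⟨x₀, hx₀, hgx₀⟩ := this
    have hx₀U : x₀ ∈ g ⁻¹' U := by rw [mem_preimage, hgx₀]; exact hoU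
    obtain ⟨I, u, hu, hpi⟩ := (isOpen_pi_iff.mp (hU.preimage hgc)) x₀ hx₀U
    set J : Finset ι := I.filter (fun i => i ∈ E) with hJ
    have hJE : (J : Set ι) ⊆ E := by
      intro i hi
      rw [hJ, Finset.coe_filter] at hi
      exact hi.2
    obtain ⟨Γ, hΓ⟩ := exists_pointOf z E b c e hcinj heinj J hJE x₀
    have hmem : pt Γ ∈ (I : Set ι).pi u := by
      intro i hiI
      rw [Finset.mem_coe] at hiI
      by_cases hiE : i ∈ E
      · have : pt Γ i = x₀ i := hΓ i (by rw [hJ, Finset.mem_filter]; exact ⟨hiI, hiE⟩)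
        rw [this]
        exact (hu i hiI).2
      · have h1 : pt Γ i = z i := pointOf_eq_z_of_not_mem hiE
        have h2 : x₀ i = z i := hx₀ i (by rwa [hE, mem_compl_iff, not_not] at hiE)
        rw [h1, ← h2]
        exact (hu i hiI).2
    exact ⟨g (pt Γ), hpi hmem, ⟨pt Γ, ⟨Γ, rfl⟩, rfl⟩⟩
  -- cardinality of D
  have hDcard : #↥D ≤ lam := by
    have h1 : #↥D ≤ #↥(Set.range pt) := mk_image_le
    have h2 : #↥(Set.range pt) ≤ #(PatList B T) := mk_range_le
    have hFT : #(Finset T) ≤ ν := le_trans (mk_finset_le T) (by rw [hTcard]; exact max_le hν le_rfl)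
    have hent : #(PatEntry T) ≤ ν := by
      have : #(PatEntry T) = #(Finset T) * (#(Finset T) * #T) := by
        simp [PatEntry, Cardinal.mk_prod, Cardinal.lift_id]
      rw [this, hTcard]
      calc #(Finset T) * (#(Finset T) * ν) ≤ ν * (ν * ν) := by
            apply mul_le_mul' hFT
            exact mul_le_mul' hFT le_rfl
        _ = ν := by rw [Cardinal.mul_eq_self hν, Cardinal.mul_eq_self hν]
    have hlist : #(List (PatEntry T)) ≤ ν :=
      le_trans (mk_list_le_max _) (max_le hν hent)
    have hpair : #(B × List (PatEntry T)) ≤ lam := by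
      have : #(B × List (PatEntry T)) = #B * #(List (PatEntry T)) := by
        simp [Cardinal.mk_prod, Cardinal.lift_id]
      rw [this, hBcard]
      calc lam * #(List (PatEntry T)) ≤ lam * ν := mul_le_mul' le_rfl hlist
        _ ≤ lam * lam := mul_le_mul' le_rfl (le_of_lt hνlam)
        _ = lam := Cardinal.mul_eq_self hlaminf
    have h3 : #(PatList B T) ≤ lam :=
      le_trans (mk_list_le_max _) (max_le hlaminf hpair)
    exact le_trans h1 (le_trans h2 h3)
  -- small subsets are not dense
  have hsmall : ∀ T' : Set X, T' ⊆ D → D ⊆ closure T' → lam ≤ #T' := by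
    intro T' hT'D hDT'
    by_contra hlt
    push_neg at hlt
    have hlift : ∀ t : ↥T', ∃ Γ : PatList B T, g (pt Γ) = t.1 := by
      rintro ⟨t, ht⟩
      obtain ⟨x, ⟨Γ, rfl⟩, hgx⟩ := hT'D ht
      exact ⟨Γ, hgx⟩
    choose Γt hΓt using hlift
    set UB : Set B := ⋃ t : ↥T', {β | ∃ q ∈ Γt t, Prod.fst q = β} with hUB
    have hUBcard : #↥UB < lam := by
      have h1 : #↥UB ≤ #↥T' * ℵ₀ := by
        apply le_trans (Cardinal.mk_iUnion_le _)
        apply mul_le_mul' le_rfl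
        apply ciSup_le'
        intro t
        have hfin : {β | ∃ q ∈ Γt t, Prod.fst q = β}.Finite := by
          apply Set.Finite.subset ((Γt t).map Prod.fst).finite_toSet
          rintro β ⟨q, hq, rfl⟩
          exact List.mem_map.mpr ⟨q, hq, rfl⟩
        haveI := hfin.to_subtype
        exact le_of_lt (Cardinal.lt_aleph0_of_finite _)
      calc #↥UB ≤ #↥T' * ℵ₀ := h1
        _ < lam := Cardinal.mul_lt_of_lt hlaminf hlt (lt_of_le_of_lt hν hνlam)
    have hUBne : UB ≠ Set.univ := by
      intro hcontra
      rw [hcontra] at hUBcard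
      rw [Cardinal.mk_univ, hBcard] at hUBcard
      exact lt_irrefl _ hUBcard
    obtain ⟨βs, hβs⟩ := (ne_univ_iff_exists_notMem _).mp hUBne
    set ξ : ι := ((j βs : ↥E) : ι) with hξ
    have hξE : ξ ∈ E := hwitE βs
    have hξS : ξ ∉ Sstar := by rwa [hE, mem_compl_iff] at hξE
    have hTsub : T' ⊆ g '' pinSet z (insert ξ Sstar) := by
      rintro t ht
      refine ⟨pt (Γt ⟨t, ht⟩), ?_, hΓt ⟨t, ht⟩⟩
      intro i hi
      rcases hi with rfl | hi
      · apply pointOf_eq_z_of_block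
        intro q hq hcon
        apply hβs
        rw [hUB, mem_iUnion]
        refine ⟨⟨t, ht⟩, q, hq, ?_⟩
        rw [hcon, hbj]
      · apply pointOf_eq_z_of_not_mem
        rw [hE]
        simp only [mem_compl_iff, not_not]
        exact hi
    have hFclosed : IsClosed (g '' pinSet z (insert ξ Sstar)) :=
      ((isClosed_pinSet z _).isCompact.image hgc).isClosed
    have huniv : g '' pinSet z (insert ξ Sstar) = Set.univ := by
      apply eq_univ_of_univ_subset
      calc Set.univ = closure D := (dense_iff_closure_eq.mp hDdense).symm
        _ ⊆ closure (closure T') := closure_mono hDT'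
        _ = closure T' := closure_closure
        _ ⊆ closure (g '' pinSet z (insert ξ Sstar)) := closure_mono hTsub
        _ = g '' pinSet z (insert ξ Sstar) := hFclosed.closure_eq
    exact hmax ξ hξS huniv
  refine ⟨D, hDdense, le_antisymm ?_ ?_⟩
  · exact le_trans (tdensity_le_mk ↥D) hDcard
  · exact le_tdensity_subtype hsmall

end MainConstruction

section OnePointHelpers
variable {Z : Type u} [TopologicalSpace Z] [DiscreteTopology Z]

lemma isClosed_of_infty_mem {s : Set (OnePoint Z)} (h : OnePoint.infty ∈ s) : IsClosed s := by
  rw [← isOpen_compl_iff, OnePoint.isOpen_iff_of_notMem (notMem_compl_iff.mpr h)]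
  exact isOpen_discrete _

lemma tweight_onePoint_subtype (s : Set (OnePoint Z)) (hs : OnePoint.infty ∈ s) :
    tweight ↥s ≤ max ℵ₀ #↥s := by
  classical
  set B1 : Set (Set ↥s) :=
    Set.range (fun c : {c : ↥s // (c : OnePoint Z) ≠ OnePoint.infty} => ({c.1} : Set ↥s)) with hB1
  set B2 : Set (Set ↥s) :=
    Set.range (fun F : {F : Finset ↥s // ∀ c ∈ F, (c : OnePoint Z) ≠ OnePoint.infty} =>
      ((F.1 : Set ↥s))ᶜ) with hB2
  have hopen : ∀ U ∈ B1 ∪ B2, IsOpen U := by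
    rintro U (⟨c, rfl⟩ | ⟨F, rfl⟩)
    · show IsOpen ({c.1} : Set ↥s)
      have h1 : IsOpen ({(c.1 : OnePoint Z)} : Set (OnePoint Z)) := by
        rw [OnePoint.isOpen_iff_of_notMem]
        · exact isOpen_discrete _
        · rw [mem_singleton_iff]
          exact fun hcon => c.2 hcon.symm
      have h2 : (Subtype.val ⁻¹' {(c.1 : OnePoint Z)} : Set ↥s) = {c.1} := by
        ext x
        simp [Subtype.ext_iff]
      rw [← h2]
      exact h1.preimage continuous_subtype_val
    · show IsOpen ((F.1 : Set ↥s))ᶜ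
      have hfin : ((Subtype.val '' (F.1 : Set ↥s)) : Set (OnePoint Z)).Finite :=
        (F.1.finite_toSet).image _
      have h1 : IsClosed (Subtype.val '' (F.1 : Set ↥s)) := hfin.isClosed
      have h2 : (Subtype.val ⁻¹' (Subtype.val '' (F.1 : Set ↥s)) : Set ↥s) = (F.1 : Set ↥s) :=
        preimage_image_eq _ Subtype.val_injective
      have h3 : IsOpen (Subtype.val ⁻¹' (Subtype.val '' (F.1 : Set ↥s))ᶜ : Set ↥s) :=
        h1.isOpen_compl.preimage continuous_subtype_val
      rwa [preimage_compl, h2] at h3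
  have hbasis : IsTopologicalBasis (B1 ∪ B2) := by
    apply isTopologicalBasis_of_isOpen_of_nhds hopen
    intro a u hau hu
    obtain ⟨v, hv, rfl⟩ := isOpen_induced_iff.mp hu
    by_cases h : (a : OnePoint Z) = OnePoint.infty
    · have hvinf : OnePoint.infty ∈ v := by rw [← h]; exact hau
      obtain ⟨_, hcomp⟩ := (OnePoint.isOpen_iff_of_mem hvinf).mp hv
      have hKfin : ((OnePoint.some ⁻¹' v)ᶜ : Set Z).Finite := hcomp.finite_of_discrete
      have hFs : (Subtype.val ⁻¹' (OnePoint.some '' ((OnePoint.some ⁻¹' v)ᶜ)) : Set ↥s).Finite :=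
        Set.Finite.preimage Subtype.val_injective.injOn (hKfin.image _)
      set F : Finset ↥s := hFs.toFinset with hF
      have hFprop : ∀ c ∈ F, (c : OnePoint Z) ≠ OnePoint.infty := by
        intro c hc
        rw [hF, Set.Finite.mem_toFinset] at hc
        obtain ⟨k, _, hk⟩ := hc
        rw [← hk]
        exact OnePoint.coe_ne_infty k
      refine ⟨((F : Set ↥s))ᶜ, Or.inr ⟨⟨F, hFprop⟩, rfl⟩, ?_, ?_⟩
      · simp only [mem_compl_iff, Finset.mem_coe]
        intro hc
        exact (hFprop a hc) h
      · intro x hx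
        simp only [mem_compl_iff, Finset.mem_coe] at hx
        show x ∈ Subtype.val ⁻¹' v
        simp only [mem_preimage]
        by_cases hxinf : (x : OnePoint Z) = OnePoint.infty
        · rw [hxinf]; exact hvinf
        · obtain ⟨k, hk⟩ := OnePoint.ne_infty_iff_exists.mp hxinf
          by_cases hkK : k ∈ (OnePoint.some ⁻¹' v)ᶜ
          · exfalso
            apply hx
            rw [hF, Set.Finite.mem_toFinset]
            exact ⟨k, hkK, hk⟩
          · have hkv : k ∈ OnePoint.some ⁻¹' v := not_not.mp hkK
            rw [← hk]
            exact hkv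
    · refine ⟨{a}, Or.inl ⟨⟨a, h⟩, rfl⟩, rfl, ?_⟩
      intro x hx
      rw [mem_singleton_iff] at hx
      rw [hx]
      exact hau
  calc tweight ↥s ≤ #↥(B1 ∪ B2) := tweight_le_of_basis hbasis
    _ ≤ #↥B1 + #↥B2 := mk_union_le _ _
    _ ≤ max ℵ₀ #↥s := by
      have h1 : #↥B1 ≤ #↥s := le_trans mk_range_le (Cardinal.mk_subtype_le _)
      have h2 : #↥B2 ≤ max ℵ₀ #↥s := by
        apply le_trans mk_range_le
        apply le_trans (Cardinal.mk_subtype_le _)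
        exact mk_finset_le ↥s
      have h3 : #↥B1 ≤ max ℵ₀ #↥s := le_trans h1 (le_max_right _ _)
      calc #↥B1 + #↥B2 ≤ max ℵ₀ #↥s + max ℵ₀ #↥s := add_le_add h3 h2
        _ = max ℵ₀ #↥s := Cardinal.add_eq_self (le_max_left _ _)

end OnePointHelpers

section Application

instance (μ : Cardinal.{u}) : CompactSpace (ACompact μ) :=
  inferInstanceAs (CompactSpace (OnePoint μ.out))

instance (μ : Cardinal.{u}) : T2Space (ACompact μ) :=
  inferInstanceAs (T2Space (OnePoint μ.out))

theorem polyadic_case {X : Type u} [TopologicalSpace X] [CompactSpace X] [T2Space X]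
    (hX : IsPolyadic X) {lam : Cardinal.{u}} (hd : tdensity X < lam) (hw : lam ≤ tweight X) :
    ∃ D : Set X, Dense D ∧ tdensity ↥D = lam := by
  classical
  obtain ⟨μ, κ, hμ, f, hfc, hfs⟩ := hX
  have hinf : Infinite X := by
    rcases finite_or_infinite X with hfin | hinf
    · exfalso
      have h1 := tweight_le_tdensity_of_finite hfin
      exact absurd (lt_of_lt_of_le hd (le_trans hw h1)) (lt_irrefl _)
    · exact hinf
  set ν : Cardinal.{u} := tdensity X with hνdef
  have hνinf : ℵ₀ ≤ ν := aleph0_le_tdensity_of_infinite hinf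
  obtain ⟨R, hR, hRcard⟩ := exists_dense_card X
  have hlift : ∀ r : ↥R, ∃ x : APow μ κ, f x = r.1 := fun r => hfs r.1
  choose y hy using hlift
  set C : κ.out → Set (ACompact μ) := fun ξ =>
    insert (OnePoint.infty : OnePoint μ.out) (Set.range (fun r : ↥R => y r ξ)) with hC
  have hinfmem : ∀ ξ, (OnePoint.infty : OnePoint μ.out) ∈ C ξ := fun ξ => mem_insert _ _
  have hCclosed : ∀ ξ, IsClosed (C ξ) := fun ξ => isClosed_of_infty_mem (hinfmem ξ)
  haveI hCcomp : ∀ ξ, CompactSpace ↥(C ξ) := fun ξ =>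
    isCompact_iff_compactSpace.mp (hCclosed ξ).isCompact
  haveI hCne : ∀ ξ, Nonempty ↥(C ξ) := fun ξ => ⟨⟨_, hinfmem ξ⟩⟩
  set g : (∀ ξ : κ.out, ↥(C ξ)) → X := fun x => f (fun ξ => (x ξ : ACompact μ)) with hg
  have hgc : Continuous g :=
    hfc.comp (continuous_pi fun ξ => continuous_subtype_val.comp (continuous_apply ξ))
  have hgs : Surjective g := by
    rw [← Set.range_eq_univ]
    have hclosed : IsClosed (Set.range g) := (isCompact_range hgc).isClosed
    have hsub : R ⊆ Set.range g := by
      intro r hr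
      refine ⟨fun ξ => ⟨y ⟨r, hr⟩ ξ, mem_insert_of_mem _ ⟨⟨r, hr⟩, rfl⟩⟩, ?_⟩
      exact hy ⟨r, hr⟩
    apply eq_univ_of_univ_subset
    calc Set.univ = closure R := (dense_iff_closure_eq.mp hR).symm
      _ ⊆ closure (Set.range g) := closure_mono hsub
      _ = Set.range g := hclosed.closure_eq
  have hcY : ∀ ξ, #↥(C ξ) ≤ ν := by
    intro ξ
    have h1 : (1 : Cardinal.{u}) ≤ ν := le_trans (le_of_lt Cardinal.one_lt_aleph0) hνinf
    calc #↥(C ξ) ≤ #↥(Set.range (fun r : ↥R => y r ξ)) + 1 := Cardinal.mk_insert_le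
      _ ≤ #↥R + 1 := add_le_add mk_range_le le_rfl
      _ ≤ ν + ν := add_le_add (le_of_eq hRcard) h1
      _ = ν := Cardinal.add_eq_self hνinf
  have hwY : ∀ ξ, tweight ↥(C ξ) ≤ ν := by
    intro ξ
    have h1 := tweight_onePoint_subtype (Z := μ.out) (C ξ) (hinfmem ξ)
    exact le_trans h1 (max_le hνinf (hcY ξ))
  exact main_construction g hgc hgs ν lam hνinf le_rfl hwY hcY hd hw

end Application

/-- Theorem 3.5 (tm:pdd): dd(X) = [d(X), w(X)] for polyadic X. -/
theorem statement13 {X : Type u} [TopologicalSpace X] [CompactSpace X] [T2Space X]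
    (hX : IsPolyadic X) (lam : Cardinal.{u}) :
    (∃ D : Set X, Dense D ∧ tdensity ↥D = lam) ↔ tdensity X ≤ lam ∧ lam ≤ tweight X := by
  constructor
  · rintro ⟨D, hD, rfl⟩
    exact tdensity_subtype_between hD
  · rintro ⟨hd, hw⟩
    rcases eq_or_lt_of_le hd with heq | hlt
    · obtain ⟨D, hD, hcard⟩ := exists_dense_density_self X
      exact ⟨D, hD, by rw [hcard, ← heq]⟩
    · exact polyadic_case hX hlt hw
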